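/- arXiv:2512.09163 — 3 statements merged into one kernel-verified Lean document; each statement's English description precedes it below -/
import Mathlib

section
/- Let η₁, η₂, β₁, β₂ be strictly positive real numbers. If exp(-(t/η₁)^β₁) ≥ exp(-(t/η₂)^β₂) for all t > 0, then β₁ ≤ β₂. -/
/-- If two Weibull survival functions are pointwise ordered,
`exp (-(t/η₁)^β₁) ≥ exp (-(t/η₂)^β₂)` for all `t > 0`, then `β₁ ≤ β₂`. -/
theorem weibull_survival_ordering_shape
    (η₁ η₂ β₁ β₂ : ℝ) (hη₁ : 0 < η₁) (hη₂ : 0 < η₂) (hβ₁ : 0 < β₁) (hβ₂ : 0 < β₂)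
    (h : ∀ t : ℝ, 0 < t →
      Real.exp (-((t / η₁) ^ β₁)) ≥ Real.exp (-((t / η₂) ^ β₂))) :
    β₁ ≤ β₂ := by
  by_contra hlt
  push_neg at hlt
  have hδpos : 0 < β₁ - β₂ := sub_pos.mpr hlt
  set C := η₁ ^ β₁ / η₂ ^ β₂ with hC
  have hCpos : 0 < C :=
    div_pos (Real.rpow_pos_of_pos hη₁ _) (Real.rpow_pos_of_pos hη₂ _)
  set t := (C + 1) ^ (1 / (β₁ - β₂)) with ht
  have hC1 : (0:ℝ) ≤ C + 1 := by linarith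
  have htpos : 0 < t := Real.rpow_pos_of_pos (by linarith) _
  have htδ : t ^ (β₁ - β₂) = C + 1 := by
    rw [ht, ← Real.rpow_mul hC1, one_div_mul_cancel (ne_of_gt hδpos), Real.rpow_one]
  have key : (t / η₁) ^ β₁ ≤ (t / η₂) ^ β₂ := by
    have := h t htpos
    have h2 : -((t / η₂) ^ β₂) ≤ -((t / η₁) ^ β₁) := Real.exp_le_exp.mp this
    linarith
  rw [Real.div_rpow htpos.le hη₁.le, Real.div_rpow htpos.le hη₂.le] at key
  have h3 : t ^ β₁ ≤ t ^ β₂ * C := by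
    rw [hC]
    have hη₁p : 0 < η₁ ^ β₁ := Real.rpow_pos_of_pos hη₁ _
    have hη₂p : 0 < η₂ ^ β₂ := Real.rpow_pos_of_pos hη₂ _
    rw [div_le_div_iff₀ hη₁p hη₂p] at key
    rw [← mul_div_assoc, le_div_iff₀ hη₂p]
    linarith
  have h4 : t ^ β₁ = t ^ β₂ * t ^ (β₁ - β₂) := by
    rw [← Real.rpow_add htpos]; ring_nf
  rw [h4, htδ] at h3
  have h5 : 0 < t ^ β₂ := Real.rpow_pos_of_pos htpos _
  nlinarith
end

section
/- Let η₁, η₂, β₁, β₂ be strictly positive real numbers. If exp(-(t/η₁)^β₁) ≥ exp(-(t/η₂)^β₂) for all t > 0, then the corresponding Weibull means are ordered: η₁ · Γ(1 + 1/β₁) ≥ η₂ · Γ(1 + 1/β₂). -/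
open Real Set MeasureTheory

lemma weibull_integrable (η β : ℝ) (hη : 0 < η) (hβ : 0 < β) :
    IntegrableOn (fun x : ℝ => Real.exp (-((x / η) ^ β))) (Ioi (0 : ℝ)) := by
  have hb : (0 : ℝ) < η ^ (-β) := rpow_pos_of_pos hη _
  have key : IntegrableOn (fun x : ℝ => Real.exp (-(η ^ (-β) * x ^ β))) (Ioi (0 : ℝ)) := by
    rw [← integrableOn_Ioi_comp_rpow_iff _ (ne_of_gt (one_div_pos.mpr hβ))]
    have : IntegrableOn
        (fun x : ℝ => |1 / β| * (x ^ (1 / β - 1) * Real.exp (-(η ^ (-β)) * x ^ (1:ℝ))))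
        (Ioi (0 : ℝ)) :=
      (integrableOn_rpow_mul_exp_neg_mul_rpow (by
        have : 0 < 1 / β := one_div_pos.mpr hβ
        linarith) zero_lt_one hb).const_mul _
    refine this.congr_fun (fun x hx => ?_) measurableSet_Ioi
    have hx0 : (0 : ℝ) < x := hx
    dsimp only
    rw [smul_eq_mul, ← rpow_mul hx0.le, one_div_mul_cancel (ne_of_gt hβ), rpow_one, neg_mul]
    ring
  refine key.congr_fun (fun x hx => ?_) measurableSet_Ioi
  have hx0 : (0 : ℝ) < x := hx
  rw [div_rpow hx0.le hη.le, div_eq_mul_inv, ← rpow_neg hη.le, mul_comm]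

lemma weibull_mean (η β : ℝ) (hη : 0 < η) (hβ : 0 < β) :
    ∫ x in Ioi (0 : ℝ), Real.exp (-((x / η) ^ β)) = η * Real.Gamma (1 + 1 / β) := by
  have hb : (0 : ℝ) < η ^ (-β) := rpow_pos_of_pos hη _
  have h1 : ∫ x in Ioi (0 : ℝ), Real.exp (-((x / η) ^ β))
      = ∫ x in Ioi (0 : ℝ), Real.exp (-(η ^ (-β)) * x ^ β) := by
    refine setIntegral_congr_fun measurableSet_Ioi (fun x hx => ?_)
    have hx0 : (0 : ℝ) < x := hx
    rw [div_rpow hx0.le hη.le, div_eq_mul_inv, ← rpow_neg hη.le, neg_mul, mul_comm]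
  rw [h1, integral_exp_neg_mul_rpow hβ hb, ← rpow_mul hη.le]
  rw [show -β * (-1 / β) = 1 by field_simp]
  rw [rpow_one, add_comm]

/-- If two Weibull survival functions are pointwise ordered,
`exp (-(t/η₁)^β₁) ≥ exp (-(t/η₂)^β₂)` for all `t > 0`, then the corresponding
Weibull means are ordered: `η₁ * Γ(1 + 1/β₁) ≥ η₂ * Γ(1 + 1/β₂)`. -/
theorem weibull_survival_ordering_mean
    (η₁ η₂ β₁ β₂ : ℝ) (hη₁ : 0 < η₁) (hη₂ : 0 < η₂) (hβ₁ : 0 < β₁) (hβ₂ : 0 < β₂)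
    (h : ∀ t : ℝ, 0 < t →
      Real.exp (-((t / η₁) ^ β₁)) ≥ Real.exp (-((t / η₂) ^ β₂))) :
    η₁ * Real.Gamma (1 + 1 / β₁) ≥ η₂ * Real.Gamma (1 + 1 / β₂) := by
  rw [← weibull_mean η₁ β₁ hη₁ hβ₁, ← weibull_mean η₂ β₂ hη₂ hβ₂]
  exact setIntegral_mono_on (weibull_integrable η₂ β₂ hη₂ hβ₂)
    (weibull_integrable η₁ β₁ hη₁ hβ₁) measurableSet_Ioi (fun x hx => h x hx)
end

section
/- Fix L ≥ 1 and layer widths m₀ = d, m₁, …, m_L ≥ 1, and let M ≥ m_ℓ for all 0 ≤ ℓ ≤ L-1. Suppose for each 1 ≤ ℓ ≤ L we are given a real m_ℓ × m_{ℓ-1} matrix W_ℓ with Frobenius norm ‖W_ℓ‖_F ≤ R and a bias b_ℓ ∈ ℝ^{m_ℓ} with ‖b_ℓ‖_∞ ≤ R, where R ≥ 0. Given an input x ∈ ℝ^d, define the layer outputs recursively by h₀ = x and (h_ℓ)_i = log(1 + exp((W_ℓ · h_{ℓ-1} + b_ℓ)_i)). Then ‖h_L‖_∞ ≤ (log 2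 + R) · Σ_{k=0}^{L-1} (√M · R)^k + (√M · R)^L · ‖x‖_∞. -/
noncomputable def frobeniusNorm {m q : ℕ} (W : Matrix (Fin m) (Fin q) ℝ) : ℝ :=
  Real.sqrt (∑ i, ∑ j, (W i j) ^ 2)

lemma softplus_abs_le (t : ℝ) : |Real.log (1 + Real.exp t)| ≤ Real.log 2 + |t| := by
  have h1 : (0:ℝ) < 1 + Real.exp t := by positivity
  have hnn : 0 ≤ Real.log (1 + Real.exp t) := by
    apply Real.log_nonneg; nlinarith [Real.exp_pos t]
  rw [abs_of_nonneg hnn]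
  have h2 : 1 + Real.exp t ≤ 2 * Real.exp |t| := by
    have ha : Real.exp t ≤ Real.exp |t| := Real.exp_le_exp.2 (le_abs_self t)
    have hb : (1:ℝ) ≤ Real.exp |t| := Real.one_le_exp (abs_nonneg t)
    linarith
  calc Real.log (1 + Real.exp t) ≤ Real.log (2 * Real.exp |t|) :=
        Real.log_le_log h1 h2
    _ = Real.log 2 + |t| := by
        rw [Real.log_mul (by norm_num) (Real.exp_ne_zero _), Real.log_exp]

lemma dot_bound {m q : ℕ} (W : Matrix (Fin m) (Fin q) ℝ) (v : Fin q → ℝ) (i : Fin m) :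
    |(W.mulVec v) i| ≤ frobeniusNorm W * Real.sqrt q * ‖v‖ := by
  have h1 : |(W.mulVec v) i| ≤ (∑ j, |W i j|) * ‖v‖ := by
    rw [Matrix.mulVec, dotProduct]
    calc |∑ j, W i j * v j| ≤ ∑ j, |W i j * v j| := Finset.abs_sum_le_sum_abs _ _
      _ ≤ ∑ j, |W i j| * ‖v‖ := by
          apply Finset.sum_le_sum
          intro j _
          rw [abs_mul]
          exact mul_le_mul_of_nonneg_left (norm_le_pi_norm v j) (abs_nonneg _)
      _ = (∑ j, |W i j|) * ‖v‖ := by rw [Finset.sum_mul]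
  have h2 : (∑ j, |W i j|) ≤ Real.sqrt q * Real.sqrt (∑ j, (W i j)^2) := by
    have hcs : (∑ j, |W i j|) ^ 2 ≤ (q : ℝ) * ∑ j, (W i j)^2 := by
      have := sq_sum_le_card_mul_sum_sq (s := Finset.univ) (f := fun j => |W i j|)
      simpa [sq_abs] using this
    have hnn : 0 ≤ ∑ j, |W i j| := Finset.sum_nonneg fun j _ => abs_nonneg _
    calc (∑ j, |W i j|) = Real.sqrt ((∑ j, |W i j|)^2) := (Real.sqrt_sq hnn).symm
      _ ≤ Real.sqrt ((q : ℝ) * ∑ j, (W i j)^2) := Real.sqrt_le_sqrt hcs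
      _ = Real.sqrt q * Real.sqrt (∑ j, (W i j)^2) := Real.sqrt_mul (by positivity) _
  have h3 : Real.sqrt (∑ j, (W i j)^2) ≤ frobeniusNorm W := by
    apply Real.sqrt_le_sqrt
    exact Finset.single_le_sum (f := fun i => ∑ j, (W i j)^2)
      (fun i _ => Finset.sum_nonneg fun j _ => sq_nonneg _) (Finset.mem_univ i)
  calc |(W.mulVec v) i| ≤ (∑ j, |W i j|) * ‖v‖ := h1
    _ ≤ (Real.sqrt q * Real.sqrt (∑ j, (W i j)^2)) * ‖v‖ :=
        mul_le_mul_of_nonneg_right h2 (norm_nonneg _)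
    _ ≤ (Real.sqrt q * frobeniusNorm W) * ‖v‖ := by
        apply mul_le_mul_of_nonneg_right _ (norm_nonneg _)
        exact mul_le_mul_of_nonneg_left h3 (Real.sqrt_nonneg _)
    _ = frobeniusNorm W * Real.sqrt q * ‖v‖ := by ring

/-- Proposition 2 (uniform upper bound for a softplus MLP): if every layer has
Frobenius-norm-bounded weights and sup-norm-bounded biases (by `R`), and all
hidden widths `m₀, …, m_{L-1}` are at most `M`, then the sup norm of the output
of the `L`-layer softplus network started at input `x` satisfies
`‖h_L‖_∞ ≤ (log 2 + R) Σ_{k=0}^{L-1} (√M R)^k + (√M R)^L ‖x‖_∞`. -/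
theorem mlp_softplus_output_bound
    (L : ℕ) (hL : 1 ≤ L) (mw : ℕ → ℕ) (hmw : ∀ ℓ, ℓ ≤ L → 1 ≤ mw ℓ)
    (M : ℕ) (hM : ∀ ℓ, ℓ ≤ L - 1 → mw ℓ ≤ M)
    (R : ℝ) (hR : 0 ≤ R)
    (W : ∀ ℓ : ℕ, Matrix (Fin (mw ℓ)) (Fin (mw (ℓ - 1))) ℝ)
    (b : ∀ ℓ : ℕ, Fin (mw ℓ) → ℝ)
    (hW : ∀ ℓ, 1 ≤ ℓ → ℓ ≤ L → frobeniusNorm (W ℓ) ≤ R)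
    (hb : ∀ ℓ, 1 ≤ ℓ → ℓ ≤ L → ‖b ℓ‖ ≤ R)
    (x : Fin (mw 0) → ℝ)
    (h : ∀ ℓ : ℕ, Fin (mw ℓ) → ℝ)
    (hh0 : h 0 = x)
    (hrec : ∀ ℓ, 1 ≤ ℓ → ℓ ≤ L → ∀ i,
      h ℓ i = Real.log (1 + Real.exp (((W ℓ).mulVec (h (ℓ - 1)) + b ℓ) i))) :
    ‖h L‖ ≤ (Real.log 2 + R) * ∑ k ∈ Finset.range L, (Real.sqrt M * R) ^ k +
      (Real.sqrt M * R) ^ L * ‖x‖ := by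
  set c : ℝ := Real.sqrt M * R with hc
  have hc0 : 0 ≤ c := mul_nonneg (Real.sqrt_nonneg _) hR
  set A : ℝ := Real.log 2 + R with hA
  have hA0 : 0 ≤ A := add_nonneg (Real.log_nonneg (by norm_num)) hR
  have key : ∀ ℓ, ℓ ≤ L →
      ‖h ℓ‖ ≤ A * ∑ k ∈ Finset.range ℓ, c ^ k + c ^ ℓ * ‖x‖ := by
    intro ℓ
    induction ℓ with
    | zero => intro _; simp [hh0]
    | succ n ih =>
      intro hnL
      have hn : n ≤ L := Nat.le_of_succ_le hnL
      have ihn := ih hn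
      have hsum0 : 0 ≤ ∑ k ∈ Finset.range n, c ^ k :=
        Finset.sum_nonneg fun k _ => pow_nonneg hc0 k
      have hrhs0 : 0 ≤ A * ∑ k ∈ Finset.range (n+1), c ^ k + c ^ (n+1) * ‖x‖ := by
        have : 0 ≤ ∑ k ∈ Finset.range (n+1), c ^ k :=
          Finset.sum_nonneg fun k _ => pow_nonneg hc0 k
        positivity
    
      rw [pi_norm_le_iff_of_nonneg hrhs0]
      intro i
      rw [hrec (n+1) (Nat.succ_le_succ (Nat.zero_le n)) hnL i]
      have hW' : frobeniusNorm (W (n+1)) ≤ R := hW _ (by omega) hnL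
      have hb' : |b (n+1) i| ≤ R :=
        le_trans (norm_le_pi_norm (b (n+1)) i) (hb _ (by omega) hnL)
      have hmwM : (mw n : ℝ) ≤ (M : ℝ) := by
        exact_mod_cast hM n (by omega)
      have hdot : |((W (n+1)).mulVec (h (n+1-1))) i| ≤ c * ‖h n‖ := by
        have := dot_bound (W (n+1)) (h (n+1-1)) i
        have hq : Real.sqrt (mw (n+1-1)) ≤ Real.sqrt M := Real.sqrt_le_sqrt hmwM
        calc |((W (n+1)).mulVec (h (n+1-1))) i|
            ≤ frobeniusNorm (W (n+1)) * Real.sqrt (mw (n+1-1)) * ‖h (n+1-1)‖ := this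
          _ ≤ R * Real.sqrt M * ‖h n‖ := by
              apply mul_le_mul_of_nonneg_right _ (norm_nonneg _)
              apply mul_le_mul hW' hq (Real.sqrt_nonneg _) hR
          _ = c * ‖h n‖ := by ring
      have habs : |(((W (n+1)).mulVec (h (n+1-1)) + b (n+1)) i)| ≤ c * ‖h n‖ + R := by
        calc |((W (n+1)).mulVec (h (n+1-1)) + b (n+1)) i|
            ≤ |((W (n+1)).mulVec (h (n+1-1))) i| + |b (n+1) i| := abs_add_le _ _
          _ ≤ c * ‖h n‖ + R := add_le_add hdot hb'
      calc ‖Real.log (1 + Real.exp (((W (n+1)).mulVec (h (n+1-1)) + b (n+1)) i))‖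
          ≤ Real.log 2 + |(((W (n+1)).mulVec (h (n+1-1)) + b (n+1)) i)| :=
            softplus_abs_le _
        _ ≤ Real.log 2 + (c * ‖h n‖ + R) := by linarith
        _ = A + c * ‖h n‖ := by ring
        _ ≤ A + c * (A * ∑ k ∈ Finset.range n, c ^ k + c ^ n * ‖x‖) := by
            have := mul_le_mul_of_nonneg_left ihn hc0
            linarith
        _ = A * ∑ k ∈ Finset.range (n+1), c ^ k + c ^ (n+1) * ‖x‖ := by
            have hsucc : ∑ k ∈ Finset.range (n+1), c ^ k
                = c * ∑ k ∈ Finset.range n, c ^ k + 1 := by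
              rw [Finset.sum_range_succ' (fun k => c ^ k)]
              simp [pow_succ, ← Finset.mul_sum, mul_comm]
            rw [hsucc]
            ring
  exact key L le_rfl
end
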